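/- arXiv:2206.09331 — 4 statements merged into one kernel-verified Lean document; each statement's English description precedes it below -/
import Mathlib

section
/- Let d, n ≥ 1, M ≥ 0 and c₁ > 0. Let A_{ij}, A_j⁺, A_j⁻, A₀, Q_j, P_j, V : ℝ^d → M_n(ℂ) (for 1 ≤ i, j ≤ d) be measurable matrix-valued functions whose Frobenius norms are bounded by M almost everywhere, and assume the ellipticity condition Re Σ_{i,j=1}^{d} ⟨A_{ij}(x) z_j, z_i⟩_{ℂⁿ} ≥ c₁ Σ_{i=1}^{d} |z_i|² for all z₁, …, z_d ∈ ℂⁿ and almost every x ∈ ℝ^d. Then there exist λ₀ ∈ ℝ and c₄ > 0, depending only on d, n, M and c₁, such that for every λ ∈ ℂ with Re λ < λ₀ and every continuously differentiable compactly supported u : ℝ^d → ℂⁿ: Re [ Σ_{i,j} ∫ ⟨A_{ij} ∂_j u, ∂_i u⟩ + Σ_j ∫ ⟨(A_j⁺ + Q_j) ∂_j u, u⟩ − Σ_j ∫ ⟨(A_j⁻ + P_j) u, ∂_j u⟩ + ∫ ⟨(A₀ + V) u, u⟩ − λ ∫ |u|² ] ≥ c₄ ‖u‖_{H¹}². -/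
open MeasureTheory

noncomputable section

/-- `ℝ^d` with its Euclidean structure. -/
abbrev Ed (d : ℕ) := EuclideanSpace ℝ (Fin d)

/-- `ℂⁿ` with its Euclidean (Hermitian) structure. -/
abbrev Cn (n : ℕ) := EuclideanSpace ℂ (Fin n)

/-- Frobenius norm of a complex `n × n` matrix. -/
def frob {n : ℕ} (A : Matrix (Fin n) (Fin n) ℂ) : ℝ :=
  Real.sqrt (∑ i, ∑ k, ‖A i k‖ ^ 2)

/-- Action of a matrix on a vector of `ℂⁿ`. -/
def matAct {n : ℕ} (A : Matrix (Fin n) (Fin n) ℂ) (v : Cn n) : Cn n :=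
  WithLp.toLp 2 (fun i => ∑ k, A i k * v k)

/-- Standard inner product `⟨a, b⟩` on `ℂⁿ` (linear in the first argument). -/
def dotC {n : ℕ} (a b : Cn n) : ℂ := ∑ k, a k * (starRingEnd ℂ) (b k)

/-- Partial derivative of `u` in the `j`-th coordinate direction. -/
def pd {d n : ℕ} (u : Ed d → Cn n) (j : Fin d) (x : Ed d) : Cn n :=
  fderiv ℝ u x (EuclideanSpace.single j 1)

/-- Square of the `H¹` norm: `∫|u|² + ∫‖Du‖²`, `Du` the total derivative. -/
def hnormSq {d n : ℕ} (u : Ed d → Cn n) : ℝ :=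
  (∫ x, ‖u x‖ ^ 2) + ∫ x, ‖fderiv ℝ u x‖ ^ 2


lemma dotC_eq_inner {n : ℕ} (a b : Cn n) : dotC a b = inner ℂ b a := by
  rw [PiLp.inner_apply]
  simp [dotC, RCLike.inner_apply, mul_comm]

lemma norm_dotC_le {n : ℕ} (a b : Cn n) : ‖dotC a b‖ ≤ ‖a‖ * ‖b‖ := by
  rw [dotC_eq_inner]
  exact (norm_inner_le_norm b a).trans_eq (mul_comm _ _)

lemma frob_nonneg {n : ℕ} (A : Matrix (Fin n) (Fin n) ℂ) : 0 ≤ frob A := Real.sqrt_nonneg _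

def frobVec {n : ℕ} (A : Matrix (Fin n) (Fin n) ℂ) : EuclideanSpace ℂ (Fin n × Fin n) :=
  WithLp.toLp 2 (fun p : Fin n × Fin n => A p.1 p.2)

lemma frob_eq_norm {n : ℕ} (A : Matrix (Fin n) (Fin n) ℂ) : frob A = ‖frobVec A‖ := by
  rw [EuclideanSpace.norm_eq, frob]
  congr 1
  rw [Fintype.sum_prod_type]
  rfl

lemma frobVec_add {n : ℕ} (A B : Matrix (Fin n) (Fin n) ℂ) :
    frobVec (A + B) = frobVec A + frobVec B := by
  ext p; simp [frobVec]

lemma frob_add_le {n : ℕ} (A B : Matrix (Fin n) (Fin n) ℂ) :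
    frob (A + B) ≤ frob A + frob B := by
  rw [frob_eq_norm, frob_eq_norm, frob_eq_norm, frobVec_add]
  exact norm_add_le _ _

lemma norm_matAct_le {n : ℕ} (A : Matrix (Fin n) (Fin n) ℂ) (v : Cn n) :
    ‖matAct A v‖ ≤ frob A * ‖v‖ := by
  have hrow : ∀ i, ‖matAct A v i‖ ≤ Real.sqrt (∑ k, ‖A i k‖ ^ 2) * ‖v‖ := by
    intro i
    have : matAct A v i = dotC v (WithLp.toLp 2 fun k => (starRingEnd ℂ) (A i k)) := by
      simp [matAct, dotC, mul_comm]
    rw [this]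
    have := norm_dotC_le v (WithLp.toLp 2 fun k => (starRingEnd ℂ) (A i k))
    refine this.trans ?_
    rw [mul_comm]
    gcongr
    rw [EuclideanSpace.norm_eq]
    apply Real.sqrt_le_sqrt
    simp
  have h2 : ‖matAct A v‖ ^ 2 ≤ (frob A * ‖v‖) ^ 2 := by
    rw [EuclideanSpace.norm_eq, Real.sq_sqrt (by positivity)]
    have : (frob A * ‖v‖) ^ 2 = ∑ i, (Real.sqrt (∑ k, ‖A i k‖ ^ 2) * ‖v‖) ^ 2 := by
      rw [mul_pow, frob, Real.sq_sqrt (by positivity), Finset.sum_mul]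
      congr 1; funext i
      rw [mul_pow, Real.sq_sqrt (by positivity)]
    rw [this]
    exact Finset.sum_le_sum fun i _ => by
      have := hrow i
      have h0 : (0:ℝ) ≤ ‖matAct A v i‖ := norm_nonneg _
      nlinarith
  have h0 : (0:ℝ) ≤ frob A * ‖v‖ := mul_nonneg (frob_nonneg A) (norm_nonneg v)
  nlinarith [norm_nonneg (matAct A v)]

lemma opnorm_sq_le {d n : ℕ} (L : Ed d →L[ℝ] Cn n) :
    ‖L‖ ^ 2 ≤ ∑ j, ‖L (EuclideanSpace.single j 1)‖ ^ 2 := by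
  set C := Real.sqrt (∑ j, ‖L (EuclideanSpace.single j 1)‖ ^ 2) with hC
  have hC0 : 0 ≤ C := Real.sqrt_nonneg _
  have hb : ‖L‖ ≤ C := by
    apply ContinuousLinearMap.opNorm_le_bound _ hC0
    intro v
    have hv : v = ∑ j, v j • EuclideanSpace.single j 1 := by
      apply PiLp.ext
      intro i
      have hsa : (∑ x : Fin d, v x • EuclideanSpace.single x (1:ℝ)) i
          = ∑ x, (v x • EuclideanSpace.single x (1:ℝ)) i := by rw [WithLp.ofLp_sum, Finset.sum_apply]
      rw [hsa]
      simp [EuclideanSpace.single_apply]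
    calc ‖L v‖ = ‖∑ j, v j • L (EuclideanSpace.single j 1)‖ := by
          conv_lhs => rw [hv]
          rw [map_sum]
          simp
      _ ≤ ∑ j, ‖v j‖ * ‖L (EuclideanSpace.single j 1)‖ := by
          refine (norm_sum_le _ _).trans ?_
          gcongr with j _
          rw [norm_smul]
      _ ≤ C * ‖v‖ := by
          have hcs := Finset.sum_mul_sq_le_sq_mul_sq Finset.univ
            (fun j => ‖v j‖) (fun j => ‖L (EuclideanSpace.single j 1)‖)
          have hvn : ‖v‖ = Real.sqrt (∑ j, ‖v j‖ ^ 2) := by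
            rw [EuclideanSpace.norm_eq]
          have hS0 : (0:ℝ) ≤ ∑ j, ‖v j‖ * ‖L (EuclideanSpace.single j 1)‖ :=
            Finset.sum_nonneg fun j _ => mul_nonneg (norm_nonneg _) (norm_nonneg _)
          have hCv0 : (0:ℝ) ≤ C * ‖v‖ := mul_nonneg hC0 (norm_nonneg _)
          have hsq : (C * ‖v‖) ^ 2 = (∑ j, ‖v j‖ ^ 2) * (∑ j, ‖L (EuclideanSpace.single j 1)‖ ^ 2) := by
            rw [mul_pow, hvn, Real.sq_sqrt (by positivity), Real.sq_sqrt (by positivity)]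
            ring
          nlinarith [hcs]
  calc ‖L‖ ^ 2 ≤ C ^ 2 := by gcongr
    _ = _ := Real.sq_sqrt (by positivity)

lemma abs_re_dotC_le {n : ℕ} (a b : Cn n) : |(dotC a b).re| ≤ ‖a‖ * ‖b‖ :=
  (Complex.abs_re_le_norm _).trans (norm_dotC_le a b)

lemma measurable_dotC_matAct {d n : ℕ} {B : Ed d → Matrix (Fin n) (Fin n) ℂ}
    (hB : ∀ p q, Measurable fun x => B x p q)
    {f g : Ed d → Cn n} (hf : Continuous f) (hg : Continuous g) :
    Measurable fun x => dotC (matAct (B x) (f x)) (g x) := by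
  unfold dotC matAct
  apply Finset.measurable_sum
  intro k _
  apply Measurable.mul
  · show Measurable fun a => ∑ l, B a k l * (f a).ofLp l
    apply Finset.measurable_sum
    intro l _
    exact (hB k l).mul ((continuous_apply l).comp (by fun_prop : Continuous fun a => (f a).ofLp)).measurable
  · exact (Complex.continuous_conj.comp ((continuous_apply k).comp (by fun_prop : Continuous fun a => (g a).ofLp))).measurable

lemma integ_dotC {d n : ℕ} {B : Ed d → Matrix (Fin n) (Fin n) ℂ} {C : ℝ}
    (hB : ∀ p q, Measurable fun x => B x p q) (hBC : ∀ᵐ x, frob (B x) ≤ C)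
    {f g : Ed d → Cn n} (hf : Continuous f) (hfs : HasCompactSupport f)
    (hg : Continuous g) (hgs : HasCompactSupport g) :
    Integrable fun x => dotC (matAct (B x) (f x)) (g x) := by
  have hdom : Integrable (fun x => C * (‖f x‖ * ‖g x‖)) := by
    apply Integrable.const_mul
    apply Continuous.integrable_of_hasCompactSupport (hf.norm.mul hg.norm)
    exact (hfs.norm.mul_right)
  refine hdom.mono' ((measurable_dotC_matAct hB hf hg).aestronglyMeasurable) ?_
  filter_upwards [hBC] with x hx
  calc ‖dotC (matAct (B x) (f x)) (g x)‖ ≤ ‖matAct (B x) (f x)‖ * ‖g x‖ := norm_dotC_le _ _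
    _ ≤ (frob (B x) * ‖f x‖) * ‖g x‖ := by gcongr; exact norm_matAct_le _ _
    _ ≤ C * (‖f x‖ * ‖g x‖) := by
        rw [mul_assoc]
        exact mul_le_mul_of_nonneg_right hx (by positivity)

lemma cont_pd {d n : ℕ} {u : Ed d → Cn n} (hu : ContDiff ℝ 1 u) (j : Fin d) :
    Continuous (pd u j) :=
  (hu.continuous_fderiv one_ne_zero).clm_apply continuous_const

lemma hcs_pd {d n : ℕ} {u : Ed d → Cn n} (hcs : HasCompactSupport u) (j : Fin d) :
    HasCompactSupport (pd u j) := by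
  exact hcs.fderiv_apply ℝ (EuclideanSpace.single j 1)

lemma young_aux {c M a b : ℝ} (hc : 0 < c) :
    2*M*(a*b) + 2*M*(a*b) ≤ (c/2)*a^2 + (8*M^2/c)*b^2 := by
  have hid : c * (8*M^2/c) = 8*M^2 := by field_simp
  nlinarith [sq_nonneg (c*a - 4*M*b), hc, hid]

/-- Uniform coercivity estimate (3.7) of the paper, on `Ω = ℝ^d`:
for bounded measurable matrix coefficients satisfying the ellipticity condition there
exist `λ₀ ∈ ℝ` and `c₄ > 0`, depending only on `d`, `n`, `M`, `c₁`, such that for all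
`λ` with `Re λ < λ₀` and all `C¹` compactly supported `u` the real part of the
sesquilinear form `𝔤_λ(u,u)` is at least `c₄‖u‖²_{H¹}`. -/
theorem stmt_3 (d n : ℕ) (hd : 1 ≤ d) (hn : 1 ≤ n)
    (M : ℝ) (hM : 0 ≤ M) (c₁ : ℝ) (hc₁ : 0 < c₁) :
    ∃ (lam₀ c₄ : ℝ), 0 < c₄ ∧
      ∀ (A : Fin d → Fin d → Ed d → Matrix (Fin n) (Fin n) ℂ)
        (Ap Am : Fin d → Ed d → Matrix (Fin n) (Fin n) ℂ)
        (A₀ : Ed d → Matrix (Fin n) (Fin n) ℂ)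
        (Q P : Fin d → Ed d → Matrix (Fin n) (Fin n) ℂ)
        (W : Ed d → Matrix (Fin n) (Fin n) ℂ),
        (∀ i j p q, Measurable fun x => A i j x p q) →
        (∀ j p q, Measurable fun x => Ap j x p q) →
        (∀ j p q, Measurable fun x => Am j x p q) →
        (∀ p q, Measurable fun x => A₀ x p q) →
        (∀ j p q, Measurable fun x => Q j x p q) →
        (∀ j p q, Measurable fun x => P j x p q) →
        (∀ p q, Measurable fun x => W x p q) →
        (∀ᵐ x, ∀ i j, frob (A i j x) ≤ M) →
        (∀ᵐ x, ∀ j, frob (Ap j x) ≤ M ∧ frob (Am j x) ≤ M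
          ∧ frob (Q j x) ≤ M ∧ frob (P j x) ≤ M) →
        (∀ᵐ x, frob (A₀ x) ≤ M ∧ frob (W x) ≤ M) →
        (∀ᵐ x, ∀ z : Fin d → Cn n,
          c₁ * ∑ i, ‖z i‖ ^ 2
            ≤ (∑ i, ∑ j, dotC (matAct (A i j x) (z j)) (z i)).re) →
        ∀ lam : ℂ, lam.re < lam₀ →
        ∀ u : Ed d → Cn n, ContDiff ℝ 1 u → HasCompactSupport u →
        c₄ * hnormSq u ≤
          ((∑ i, ∑ j, ∫ x, dotC (matAct (A i j x) (pd u j x)) (pd u i x))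
            + (∑ j, ∫ x, dotC (matAct (Ap j x + Q j x) (pd u j x)) (u x))
            - (∑ j, ∫ x, dotC (matAct (Am j x + P j x) (u x)) (pd u j x))
            + (∫ x, dotC (matAct (A₀ x + W x) (u x)) (u x))
            - lam * ((∫ x, ‖u x‖ ^ 2 : ℝ) : ℂ)).re := by
  refine ⟨-(8*(d:ℝ)*M^2/c₁ + 2*M + c₁/2), c₁/2, by positivity, ?_⟩
  intro A Ap Am A₀ Q P W mA mAp mAm mA₀ mQ mP mW bA bApQ bA₀W hell lam hlam u hu hcs
  have hc : Continuous u := hu.continuous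
  have hcp : ∀ j, Continuous (pd u j) := cont_pd hu
  have hsp : ∀ j, HasCompactSupport (pd u j) := hcs_pd hcs
  have hIg : ∀ i j, Integrable fun x => dotC (matAct (A i j x) (pd u j x)) (pd u i x) :=
    fun i j => integ_dotC (mA i j) (bA.mono fun x hx => hx i j) (hcp j) (hsp j) (hcp i) (hsp i)
  have hIh : ∀ j, Integrable fun x => dotC (matAct (Ap j x + Q j x) (pd u j x)) (u x) := by
    intro j
    refine integ_dotC (B := fun x => Ap j x + Q j x) (C := 2*M) (fun p q => (mAp j p q).add (mQ j p q)) ?_ (hcp j) (hsp j) hc hcs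
    filter_upwards [bApQ] with x hx
    have h1 := frob_add_le (Ap j x) (Q j x)
    linarith [(hx j).1, (hx j).2.2.1]
  have hIk : ∀ j, Integrable fun x => dotC (matAct (Am j x + P j x) (u x)) (pd u j x) := by
    intro j
    refine integ_dotC (B := fun x => Am j x + P j x) (C := 2*M) (fun p q => (mAm j p q).add (mP j p q)) ?_ hc hcs (hcp j) (hsp j)
    filter_upwards [bApQ] with x hx
    have h1 := frob_add_le (Am j x) (P j x)
    linarith [(hx j).2.1, (hx j).2.2.2]
  have hIm : Integrable fun x => dotC (matAct (A₀ x + W x) (u x)) (u x) := by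
    refine integ_dotC (B := fun x => A₀ x + W x) (C := 2*M) (fun p q => (mA₀ p q).add (mW p q)) ?_ hc hcs hc hcs
    filter_upwards [bA₀W] with x hx
    have h1 := frob_add_le (A₀ x) (W x)
    linarith [hx.1, hx.2]
  have hIu2 : Integrable fun x => ‖u x‖^2 :=
    Continuous.integrable_of_hasCompactSupport (hc.norm.pow 2)
      (hcs.comp_left (g := fun v : Cn n => ‖v‖^2) (by simp))
  have hIpd2 : ∀ j, Integrable fun x => ‖pd u j x‖^2 := fun j =>
    Continuous.integrable_of_hasCompactSupport ((hcp j).norm.pow 2)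
      ((hsp j).comp_left (g := fun v : Cn n => ‖v‖^2) (by simp))
  have hIS : Integrable fun x => ∑ j, ‖pd u j x‖^2 :=
    integrable_finset_sum _ fun j _ => hIpd2 j
  have hIop : Integrable fun x => ‖fderiv ℝ u x‖^2 :=
    Continuous.integrable_of_hasCompactSupport ((hu.continuous_fderiv one_ne_zero).norm.pow 2)
      ((hcs.fderiv ℝ).comp_left (g := fun L : Ed d →L[ℝ] Cn n => ‖L‖^2) (by simp))
  have re_integral : ∀ {f : Ed d → ℂ}, Integrable f → (∫ x, f x).re = ∫ x, (f x).re := by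
    intro f hf
    exact (ContinuousLinearMap.integral_comp_comm Complex.reCLM hf).symm
  have re_integrable : ∀ {f : Ed d → ℂ}, Integrable f → Integrable fun x => (f x).re := by
    intro f hf
    exact hf.re
  have iF1 : Integrable fun x => ∑ i, ∑ j, (dotC (matAct (A i j x) (pd u j x)) (pd u i x)).re :=
    integrable_finset_sum _ fun i _ => integrable_finset_sum _ fun j _ => re_integrable (hIg i j)
  have iF2 : Integrable fun x => ∑ j, (dotC (matAct (Ap j x + Q j x) (pd u j x)) (u x)).re :=
    integrable_finset_sum _ fun j _ => re_integrable (hIh j)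
  have iF3 : Integrable fun x => ∑ j, (dotC (matAct (Am j x + P j x) (u x)) (pd u j x)).re :=
    integrable_finset_sum _ fun j _ => re_integrable (hIk j)
  have iF4 : Integrable fun x => (dotC (matAct (A₀ x + W x) (u x)) (u x)).re :=
    re_integrable hIm
  have iF5 : Integrable fun x => lam.re * ‖u x‖^2 := hIu2.const_mul _
  have key : ((∑ i, ∑ j, ∫ x, dotC (matAct (A i j x) (pd u j x)) (pd u i x))
        + (∑ j, ∫ x, dotC (matAct (Ap j x + Q j x) (pd u j x)) (u x))
        - (∑ j, ∫ x, dotC (matAct (Am j x + P j x) (u x)) (pd u j x))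
        + (∫ x, dotC (matAct (A₀ x + W x) (u x)) (u x))
        - lam * ((∫ x, ‖u x‖ ^ 2 : ℝ) : ℂ)).re
      = ∫ x, ((∑ i, ∑ j, (dotC (matAct (A i j x) (pd u j x)) (pd u i x)).re)
          + (∑ j, (dotC (matAct (Ap j x + Q j x) (pd u j x)) (u x)).re)
          - (∑ j, (dotC (matAct (Am j x + P j x) (u x)) (pd u j x)).re)
          + (dotC (matAct (A₀ x + W x) (u x)) (u x)).re
          - lam.re * ‖u x‖^2) := by
    have e1 : (∑ i, ∑ j, ∫ x, dotC (matAct (A i j x) (pd u j x)) (pd u i x)).re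
        = ∫ x, ∑ i, ∑ j, (dotC (matAct (A i j x) (pd u j x)) (pd u i x)).re := by
      calc (∑ i, ∑ j, ∫ x, dotC (matAct (A i j x) (pd u j x)) (pd u i x)).re
          = ∑ i, ∑ j, (∫ x, dotC (matAct (A i j x) (pd u j x)) (pd u i x)).re := by
            rw [Complex.re_sum]
            exact Finset.sum_congr rfl fun i _ => Complex.re_sum _ _
        _ = ∑ i, ∑ j, ∫ x, (dotC (matAct (A i j x) (pd u j x)) (pd u i x)).re :=
            Finset.sum_congr rfl fun i _ => Finset.sum_congr rfl fun j _ => re_integral (hIg i j)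
        _ = ∑ i, ∫ x, ∑ j, (dotC (matAct (A i j x) (pd u j x)) (pd u i x)).re :=
            Finset.sum_congr rfl fun i _ =>
              (integral_finset_sum _ fun j _ => re_integrable (hIg i j)).symm
        _ = ∫ x, ∑ i, ∑ j, (dotC (matAct (A i j x) (pd u j x)) (pd u i x)).re :=
            (integral_finset_sum _ fun i _ =>
              integrable_finset_sum _ fun j _ => re_integrable (hIg i j)).symm
    have e2 : (∑ j, ∫ x, dotC (matAct (Ap j x + Q j x) (pd u j x)) (u x)).re
        = ∫ x, ∑ j, (dotC (matAct (Ap j x + Q j x) (pd u j x)) (u x)).re := by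
      calc (∑ j, ∫ x, dotC (matAct (Ap j x + Q j x) (pd u j x)) (u x)).re
          = ∑ j, (∫ x, dotC (matAct (Ap j x + Q j x) (pd u j x)) (u x)).re :=
            Complex.re_sum _ _
        _ = ∑ j, ∫ x, (dotC (matAct (Ap j x + Q j x) (pd u j x)) (u x)).re :=
            Finset.sum_congr rfl fun j _ => re_integral (hIh j)
        _ = ∫ x, ∑ j, (dotC (matAct (Ap j x + Q j x) (pd u j x)) (u x)).re :=
            (integral_finset_sum _ fun j _ => re_integrable (hIh j)).symm
    have e3 : (∑ j, ∫ x, dotC (matAct (Am j x + P j x) (u x)) (pd u j x)).re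
        = ∫ x, ∑ j, (dotC (matAct (Am j x + P j x) (u x)) (pd u j x)).re := by
      calc (∑ j, ∫ x, dotC (matAct (Am j x + P j x) (u x)) (pd u j x)).re
          = ∑ j, (∫ x, dotC (matAct (Am j x + P j x) (u x)) (pd u j x)).re :=
            Complex.re_sum _ _
        _ = ∑ j, ∫ x, (dotC (matAct (Am j x + P j x) (u x)) (pd u j x)).re :=
            Finset.sum_congr rfl fun j _ => re_integral (hIk j)
        _ = ∫ x, ∑ j, (dotC (matAct (Am j x + P j x) (u x)) (pd u j x)).re :=
            (integral_finset_sum _ fun j _ => re_integrable (hIk j)).symm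
    have e4 : (∫ x, dotC (matAct (A₀ x + W x) (u x)) (u x)).re
        = ∫ x, (dotC (matAct (A₀ x + W x) (u x)) (u x)).re := re_integral hIm
    have e5 : (lam * ((∫ x, ‖u x‖ ^ 2 : ℝ) : ℂ)).re = ∫ x, lam.re * ‖u x‖^2 := by
      rw [integral_const_mul]
      simp [Complex.mul_re]
    rw [integral_sub, integral_add, integral_sub, integral_add,
      Complex.sub_re, Complex.add_re, Complex.sub_re, Complex.add_re, e1, e2, e3, e4, e5]
    · exact iF1
    · exact iF2
    · exact iF1.add iF2
    · exact iF3
    · exact (iF1.add iF2).sub iF3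
    · exact iF4
    · exact ((iF1.add iF2).sub iF3).add iF4
    · exact iF5
  rw [key]
  -- pointwise lower bound
  have hpt : ∀ᵐ x, (c₁/2) * (‖u x‖^2 + ∑ j, ‖pd u j x‖^2)
      ≤ ((∑ i, ∑ j, (dotC (matAct (A i j x) (pd u j x)) (pd u i x)).re)
          + (∑ j, (dotC (matAct (Ap j x + Q j x) (pd u j x)) (u x)).re)
          - (∑ j, (dotC (matAct (Am j x + P j x) (u x)) (pd u j x)).re)
          + (dotC (matAct (A₀ x + W x) (u x)) (u x)).re
          - lam.re * ‖u x‖^2) := by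
    filter_upwards [bApQ, bA₀W, hell] with x hb1 hb2 hellx
    set b : ℝ := ‖u x‖ with hbdef
    have hT1 : c₁ * ∑ j, ‖pd u j x‖^2
        ≤ ∑ i, ∑ j, (dotC (matAct (A i j x) (pd u j x)) (pd u i x)).re := by
      have h := hellx (fun j => pd u j x)
      simpa [Complex.re_sum] using h
    have hbd : ∀ (B C : Matrix (Fin n) (Fin n) ℂ) (v w : Cn n), frob B ≤ M → frob C ≤ M →
        |(dotC (matAct (B + C) v) w).re| ≤ 2*M*(‖v‖*‖w‖) := by
      intro B C v w h1 h2
      refine (abs_re_dotC_le _ _).trans ?_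
      have hma : ‖matAct (B + C) v‖ ≤ 2*M*‖v‖ := by
        refine (norm_matAct_le _ _).trans ?_
        have h3 := frob_add_le B C
        have h4 : frob (B + C) ≤ 2*M := by linarith
        exact mul_le_mul_of_nonneg_right h4 (norm_nonneg _)
      calc ‖matAct (B + C) v‖ * ‖w‖ ≤ (2*M*‖v‖) * ‖w‖ :=
            mul_le_mul_of_nonneg_right hma (norm_nonneg _)
        _ = 2*M*(‖v‖*‖w‖) := by ring
    have hT2 : ∀ j, -(2*M*(‖pd u j x‖*b))
        ≤ (dotC (matAct (Ap j x + Q j x) (pd u j x)) (u x)).re := by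
      intro j
      have := hbd (Ap j x) (Q j x) (pd u j x) (u x) (hb1 j).1 (hb1 j).2.2.1
      have h0 := neg_abs_le ((dotC (matAct (Ap j x + Q j x) (pd u j x)) (u x)).re)
      linarith
    have hT3 : ∀ j, (dotC (matAct (Am j x + P j x) (u x)) (pd u j x)).re
        ≤ 2*M*(‖pd u j x‖*b) := by
      intro j
      have := hbd (Am j x) (P j x) (u x) (pd u j x) (hb1 j).2.1 (hb1 j).2.2.2
      have h0 := le_abs_self ((dotC (matAct (Am j x + P j x) (u x)) (pd u j x)).re)
      calc (dotC (matAct (Am j x + P j x) (u x)) (pd u j x)).re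
          ≤ 2*M*(b*‖pd u j x‖) := by linarith
        _ = 2*M*(‖pd u j x‖*b) := by ring
    have hT4 : -(2*M*(b*b)) ≤ (dotC (matAct (A₀ x + W x) (u x)) (u x)).re := by
      have := hbd (A₀ x) (W x) (u x) (u x) hb2.1 hb2.2
      have h0 := neg_abs_le ((dotC (matAct (A₀ x + W x) (u x)) (u x)).re)
      linarith
    have hT2s : -(∑ j, 2*M*(‖pd u j x‖*b))
        ≤ ∑ j, (dotC (matAct (Ap j x + Q j x) (pd u j x)) (u x)).re := by
      rw [← Finset.sum_neg_distrib]
      exact Finset.sum_le_sum fun j _ => hT2 j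
    have hT3s : ∑ j, (dotC (matAct (Am j x + P j x) (u x)) (pd u j x)).re
        ≤ ∑ j, 2*M*(‖pd u j x‖*b) :=
      Finset.sum_le_sum fun j _ => hT3 j
    have hsum : ∑ j, (2*M*(‖pd u j x‖*b) + 2*M*(‖pd u j x‖*b))
        ≤ (c₁/2) * (∑ j, ‖pd u j x‖^2) + 8*(d:ℝ)*M^2/c₁*b^2 := by
      have hterm : ∀ j : Fin d, 2*M*(‖pd u j x‖*b) + 2*M*(‖pd u j x‖*b)
          ≤ (c₁/2)*‖pd u j x‖^2 + (8*M^2/c₁)*b^2 := fun j => young_aux hc₁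
      calc ∑ j, (2*M*(‖pd u j x‖*b) + 2*M*(‖pd u j x‖*b))
          ≤ ∑ j : Fin d, ((c₁/2)*‖pd u j x‖^2 + (8*M^2/c₁)*b^2) :=
            Finset.sum_le_sum fun j _ => hterm j
        _ = (c₁/2) * (∑ j, ‖pd u j x‖^2) + 8*(d:ℝ)*M^2/c₁*b^2 := by
            rw [Finset.sum_add_distrib, ← Finset.mul_sum, Finset.sum_const,
              Finset.card_univ, Fintype.card_fin, nsmul_eq_mul]
            ring
    have hsum' : (∑ j, 2*M*(‖pd u j x‖*b)) + (∑ j, 2*M*(‖pd u j x‖*b))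
        ≤ (c₁/2) * (∑ j, ‖pd u j x‖^2) + 8*(d:ℝ)*M^2/c₁*b^2 := by
      rw [← Finset.sum_add_distrib]
      exact hsum
    have hlam' : lam.re * b^2 ≤ -(8*(d:ℝ)*M^2/c₁ + 2*M + c₁/2) * b^2 :=
      mul_le_mul_of_nonneg_right hlam.le (sq_nonneg b)
    have hb2eq : b^2 = b*b := sq b
    nlinarith [hT1, hT2s, hT3s, hT4, hsum', hlam']
  -- final chain
  have hGint : Integrable fun x => ‖u x‖^2 + ∑ j, ‖pd u j x‖^2 := hIu2.add hIS
  have hFint : Integrable fun x =>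
      ((∑ i, ∑ j, (dotC (matAct (A i j x) (pd u j x)) (pd u i x)).re)
        + (∑ j, (dotC (matAct (Ap j x + Q j x) (pd u j x)) (u x)).re)
        - (∑ j, (dotC (matAct (Am j x + P j x) (u x)) (pd u j x)).re)
        + (dotC (matAct (A₀ x + W x) (u x)) (u x)).re
        - lam.re * ‖u x‖^2) :=
    ((((iF1.add iF2).sub iF3).add iF4).sub iF5)
  have step1 : c₁/2 * hnormSq u ≤ c₁/2 * ∫ x, (‖u x‖^2 + ∑ j, ‖pd u j x‖^2) := by
    apply mul_le_mul_of_nonneg_left _ (by positivity)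
    rw [hnormSq, integral_add hIu2 hIS]
    have hmono : ∫ x, ‖fderiv ℝ u x‖^2 ≤ ∫ x, ∑ j, ‖pd u j x‖^2 :=
      integral_mono hIop hIS fun x => opnorm_sq_le (fderiv ℝ u x)
    linarith
  refine step1.trans ?_
  rw [← integral_const_mul]
  exact integral_mono_ae (hGint.const_mul _) hFint hpt

end
end

section
/- Let d, n ≥ 1. There exists a constant C > 0, depending only on d, with the following property. Let r > 0, s ∈ (0, 1/2], M ≥ 0, let I be a countable index set and (M_k)_{k∈I} points of ℝ^d with |M_k − M_j| ≥ r whenever k ≠ j, and let V : ℝ^d → M_n(ℂ) be measurable with Frobenius norm |V(x)| ≤ M almost everywhere and V(x) = 0 for almost every x outside ⋃_{k∈I} B(M_k, r s), where B(a, t) is the open ball of radius t centered at a. Then, setting η := r/3, for every γ ∈ ℤ^d one has |η^{−d} ∫_{□_γ^η} V(x) dx| ≤ C M s^d and η^{−d} ∫_{□_γ^η} |V(x)|² dx ≤ C M² s^d. -/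
open MeasureTheory

noncomputable section

/-- The cell `□_γ^η = η•γ + [0,η]^d` of the rescaled lattice `ηℤ^d`. -/
def cell (d : ℕ) (η : ℝ) (γ : Fin d → ℤ) : Set (Ed d) :=
  {x | ∀ i, η * γ i ≤ x i ∧ x i ≤ η * γ i + η}

/-- Coordinate distances are dominated by the Euclidean distance. -/
lemma coord_dist_le {d : ℕ} (x y : Ed d) (i : Fin d) : dist (x i) (y i) ≤ dist x y := by
  rw [EuclideanSpace.dist_eq]
  rw [show dist (x i) (y i) = Real.sqrt (dist (x i) (y i) ^ 2) from
    (Real.sqrt_sq dist_nonneg).symm]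
  apply Real.sqrt_le_sqrt
  exact Finset.single_le_sum (f := fun j => dist (x j) (y j) ^ 2)
    (fun j _ => sq_nonneg _) (Finset.mem_univ i)

/-- Volume of an axis-parallel box in Euclidean space. -/
lemma boxvol {d : ℕ} (a b : Fin d → ℝ) :
    volume {x : Ed d | ∀ i, a i ≤ x i ∧ x i ≤ b i}
      = ∏ i, ENNReal.ofReal (b i - a i) := by
  have h : {x : Ed d | ∀ i, a i ≤ x i ∧ x i ≤ b i}
      = (MeasurableEquiv.toLp 2 (Fin d → ℝ)).symm ⁻¹'
        (Set.univ.pi fun i => Set.Icc (a i) (b i)) := by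
    ext x
    simp only [MeasurableEquiv.coe_toLp_symm, Set.mem_preimage, Set.mem_pi,
      Set.mem_univ, Set.mem_Icc, forall_const, Set.mem_setOf_eq]
  rw [h, (EuclideanSpace.volume_preserving_symm_measurableEquiv_toLp (Fin d)).measure_preimage
    (MeasurableSet.univ_pi fun i => measurableSet_Icc).nullMeasurableSet,
    volume_pi_pi]
  simp [Real.volume_Icc]

lemma boxmeas {d : ℕ} (a b : Fin d → ℝ) :
    MeasurableSet {x : Ed d | ∀ i, a i ≤ x i ∧ x i ≤ b i} := by
  have h : {x : Ed d | ∀ i, a i ≤ x i ∧ x i ≤ b i}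
      = (MeasurableEquiv.toLp 2 (Fin d → ℝ)).symm ⁻¹'
        (Set.univ.pi fun i => Set.Icc (a i) (b i)) := by
    ext x
    simp only [MeasurableEquiv.coe_toLp_symm, Set.mem_preimage, Set.mem_pi,
      Set.mem_univ, Set.mem_Icc, forall_const, Set.mem_setOf_eq]
  rw [h]
  exact (MeasurableEquiv.toLp 2 (Fin d → ℝ)).symm.measurable
    (MeasurableSet.univ_pi fun i => measurableSet_Icc)

/-- Cell-average estimate of the sparse-distribution example
(Section 3.2): a bounded measurable coefficient supported on balls of radius `r·s`
around `r`-separated points satisfies, with `η := r/3` and `C = C(d)`,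
`|η^{-d}∫_{□_γ^η} V| ≤ C M s^d` and `η^{-d}∫_{□_γ^η}|V|² ≤ C M² s^d` for all cells. -/
theorem stmt_11 (d : ℕ) (hd : 1 ≤ d) :
    ∃ C : ℝ, 0 < C ∧
      ∀ (n : ℕ), 1 ≤ n →
      ∀ (r s M : ℝ), 0 < r → 0 < s → s ≤ 1 / 2 → 0 ≤ M →
      ∀ (I : Type), Countable I →
      ∀ (pts : I → Ed d),
        (∀ k j : I, k ≠ j → r ≤ dist (pts k) (pts j)) →
      ∀ (V : Ed d → Matrix (Fin n) (Fin n) ℂ),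
        (∀ p q, Measurable fun x => V x p q) →
        (∀ᵐ x, frob (V x) ≤ M) →
        (∀ᵐ x, x ∉ (⋃ k, Metric.ball (pts k) (r * s)) → V x = 0) →
      ∀ γ : Fin d → ℤ,
        frob (fun p q =>
            (((r / 3 : ℝ) : ℂ) ^ d)⁻¹ * ∫ x in cell d (r / 3) γ, V x p q)
          ≤ C * M * s ^ d ∧
        ((r / 3) ^ d)⁻¹ * ∫ x in cell d (r / 3) γ, (frob (V x)) ^ 2
          ≤ C * M ^ 2 * s ^ d := by
  classical
  refine ⟨14 ^ d, by positivity, ?_⟩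
  intro n hn r s M hr hs hs2 hM I hI pts hsep V hVm hVbd hVsupp γ
  haveI := hI
  set η : ℝ := r / 3 with hηdef
  have hη : 0 < η := by positivity
  set U : Set (Ed d) := ⋃ k, Metric.ball (pts k) (r * s) with hUdef
  have hUmeas : MeasurableSet U := MeasurableSet.iUnion fun k => Metric.isOpen_ball.measurableSet
  -- the big enlarged box
  set big : Set (Ed d) := {x | ∀ i, η * γ i - r ≤ x i ∧ x i ≤ η * γ i + η + r} with hbigdef
  have hbigvol : volume big = ENNReal.ofReal ((η + 2 * r) ^ d) := by
    rw [hbigdef, boxvol (fun i => η * γ i - r) (fun i => η * γ i + η + r)]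
    have h1 : ∀ i : Fin d, (η * γ i + η + r) - (η * γ i - r) = η + 2 * r := fun i => by ring
    simp_rw [h1]
    rw [Finset.prod_const, Finset.card_univ, Fintype.card_fin,
      ← ENNReal.ofReal_pow (by positivity)]
  have hcellmeas : MeasurableSet (cell d η γ) :=
    boxmeas (fun i => η * γ i) (fun i => η * γ i + η)
  have hcellsub : cell d η γ ⊆ big := by
    intro x hx i
    obtain ⟨h1, h2⟩ := hx i
    constructor <;> [linarith; linarith]
  have hcellfin : volume (cell d η γ) < ⊤ :=
    lt_of_le_of_lt (le_trans (measure_mono hcellsub) hbigvol.le) ENNReal.ofReal_lt_top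
  -- key measure estimate
  have key : volume (cell d η γ ∩ U) ≤ ENNReal.ofReal ((2 * s) ^ d * (η + 2 * r) ^ d) := by
    set K := {k : I // (Metric.ball (pts k) (r * s) ∩ cell d η γ).Nonempty} with hK
    have hsub : cell d η γ ∩ U ⊆ ⋃ k : K, Metric.ball (pts k.1) (r * s) := by
      rintro x ⟨hxc, hxU⟩
      rcases Set.mem_iUnion.1 hxU with ⟨k, hk⟩
      exact Set.mem_iUnion.2 ⟨⟨k, ⟨x, hk, hxc⟩⟩, hk⟩
    have hball : ∀ k : I, volume (Metric.ball (pts k) (r * s))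
        = ENNReal.ofReal ((2 * s) ^ d) * volume (Metric.ball (pts k) (r / 2)) := by
      intro k
      have h1 : r * s = (2 * s) * (r / 2) := by ring
      rw [h1, Measure.addHaar_ball_mul_of_pos volume (pts k) (by positivity) (r / 2),
        finrank_euclideanSpace_fin, Measure.addHaar_ball_center volume (pts k) (r / 2)]
    have hdisj : Pairwise (Function.onFun Disjoint
        fun k : K => Metric.ball (pts k.1) (r / 2)) := by
      intro k j hkj
      apply Metric.ball_disjoint_ball
      have : (k : I) ≠ (j : I) := fun h => hkj (Subtype.ext h)
      have := hsep k.1 j.1 this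
      linarith
    have hsub2 : (⋃ k : K, Metric.ball (pts k.1) (r / 2)) ⊆ big := by
      intro x hx
      rcases Set.mem_iUnion.1 hx with ⟨k, hk⟩
      obtain ⟨y, hy1, hy2⟩ := k.2
      intro i
      have hdxy : dist x y < r := by
        calc dist x y ≤ dist x (pts k.1) + dist (pts k.1) y := dist_triangle _ _ _
          _ < r / 2 + r * s := by
              have ha := Metric.mem_ball.1 hk
              have hb := Metric.mem_ball.1 hy1
              rw [dist_comm (pts k.1) y]
              exact add_lt_add ha hb
          _ ≤ r := by nlinarith
      have hcoord : |x i - y i| ≤ r := by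
        have := coord_dist_le x y i
        rw [Real.dist_eq] at this
        linarith
      obtain ⟨h1, h2⟩ := hy2 i
      have := abs_le.1 hcoord
      constructor <;> [linarith [this.1]; linarith [this.2]]
    calc volume (cell d η γ ∩ U)
        ≤ volume (⋃ k : K, Metric.ball (pts k.1) (r * s)) := measure_mono hsub
      _ ≤ ∑' k : K, volume (Metric.ball (pts k.1) (r * s)) := measure_iUnion_le _
      _ = ENNReal.ofReal ((2 * s) ^ d)
            * ∑' k : K, volume (Metric.ball (pts k.1) (r / 2)) := by
          simp_rw [hball]; rw [ENNReal.tsum_mul_left]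
      _ = ENNReal.ofReal ((2 * s) ^ d)
            * volume (⋃ k : K, Metric.ball (pts k.1) (r / 2)) := by
          rw [measure_iUnion hdisj fun k => Metric.isOpen_ball.measurableSet]
      _ ≤ ENNReal.ofReal ((2 * s) ^ d) * ENNReal.ofReal ((η + 2 * r) ^ d) := by
          gcongr
          exact le_trans (measure_mono hsub2) hbigvol.le
      _ = ENNReal.ofReal ((2 * s) ^ d * (η + 2 * r) ^ d) :=
          (ENNReal.ofReal_mul (by positivity)).symm
  set T : ℝ := (volume (cell d η γ ∩ U)).toReal with hTdef
  have hT : T ≤ (2 * s) ^ d * (η + 2 * r) ^ d :=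
    ENNReal.toReal_le_of_le_ofReal (by positivity) key
  have hT0 : 0 ≤ T := ENNReal.toReal_nonneg
  -- the vector-valued function
  set F : Ed d → EuclideanSpace ℂ (Fin n × Fin n) :=
    fun x => (WithLp.equiv 2 _).symm (fun pq => V x pq.1 pq.2) with hFdef
  have hFsm : StronglyMeasurable F := by
    have hg : StronglyMeasurable (fun x (pq : Fin n × Fin n) => V x pq.1 pq.2) :=
      (measurable_pi_lambda _ fun (pq : Fin n × Fin n) => hVm pq.1 pq.2).stronglyMeasurable
    exact ((PiLp.continuousLinearEquiv 2 ℂ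
      (fun _ : Fin n × Fin n => ℂ)).symm.continuous).comp_stronglyMeasurable hg
  have hFnorm : ∀ x, ‖F x‖ = frob (V x) := by
    intro x
    rw [hFdef, EuclideanSpace.norm_eq, frob, Fintype.sum_prod_type]
    rfl
  have frob_zero : frob (0 : Matrix (Fin n) (Fin n) ℂ) = 0 := by
    simp [frob]
  have hae : ∀ᵐ x, ‖F x‖ ≤ U.indicator (fun _ => M) x := by
    filter_upwards [hVbd, hVsupp] with x h1 h2
    by_cases hx : x ∈ U
    · rw [Set.indicator_of_mem hx, hFnorm]; exact h1
    · rw [Set.indicator_of_notMem hx, hFnorm, h2 hx, frob_zero]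
  have hind_int : Integrable (U.indicator fun _ => M) (volume.restrict (cell d η γ)) :=
    (integrableOn_const hcellfin.ne).indicator hUmeas
  have hFint : IntegrableOn F (cell d η γ) :=
    Integrable.mono' hind_int hFsm.aestronglyMeasurable (ae_restrict_of_ae hae)
  have hindval : ∫ x in cell d η γ, U.indicator (fun _ => M) x = M * T := by
    rw [setIntegral_indicator hUmeas, setIntegral_const, smul_eq_mul, mul_comm, measureReal_def]
  have hnormint : ∫ x in cell d η γ, ‖F x‖ ≤ M * T := by
    rw [← hindval]
    exact integral_mono_of_nonneg (Filter.Eventually.of_forall fun x => norm_nonneg _)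
      hind_int (ae_restrict_of_ae hae)
  have hproj : ∀ p q, (∫ x in cell d η γ, F x) (p, q) = ∫ x in cell d η γ, V x p q := by
    intro p q
    have := (EuclideanSpace.proj ((p, q) : Fin n × Fin n) (𝕜 := ℂ)).integral_comp_comm hFint
    simpa [EuclideanSpace.proj, hFdef] using this.symm
  have hηd : (0 : ℝ) < η ^ d := by positivity
  constructor
  · -- first estimate
    have hA : frob (fun p q => (((η : ℝ) : ℂ) ^ d)⁻¹ * ∫ x in cell d η γ, V x p q)
        = (η ^ d)⁻¹ * ‖∫ x in cell d η γ, F x‖ := by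
      have hc : ‖(((η : ℝ) : ℂ) ^ d)⁻¹‖ = (η ^ d)⁻¹ := by
        rw [norm_inv, norm_pow, Complex.norm_real, Real.norm_eq_abs, abs_of_pos hη]
      unfold frob
      rw [EuclideanSpace.norm_eq, Fintype.sum_prod_type, ← hc,
        ← Real.sqrt_sq (norm_nonneg _), ← Real.sqrt_mul (sq_nonneg _), Finset.mul_sum]
      congr 1
      refine Finset.sum_congr rfl fun p _ => ?_
      rw [Finset.mul_sum]
      refine Finset.sum_congr rfl fun q _ => ?_
      rw [hproj p q, ← mul_pow, ← norm_mul]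
    rw [hA]
    calc (η ^ d)⁻¹ * ‖∫ x in cell d η γ, F x‖
        ≤ (η ^ d)⁻¹ * (M * T) := by
          apply mul_le_mul_of_nonneg_left _ (by positivity)
          exact le_trans (norm_integral_le_integral_norm _) hnormint
      _ ≤ (η ^ d)⁻¹ * (M * ((2 * s) ^ d * (η + 2 * r) ^ d)) := by
          apply mul_le_mul_of_nonneg_left _ (by positivity)
          exact mul_le_mul_of_nonneg_left hT hM
      _ = 14 ^ d * M * s ^ d := by
          have h7 : η + 2 * r = 7 * η := by rw [hηdef]; ring
          rw [h7, ← mul_pow, show 2 * s * (7 * η) = 14 * s * η from by ring,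
            mul_pow, mul_pow]
          field_simp
  · -- second estimate
    have hae2 : ∀ᵐ x, frob (V x) ^ 2 ≤ U.indicator (fun _ => M ^ 2) x := by
      filter_upwards [hVbd, hVsupp] with x h1 h2
      by_cases hx : x ∈ U
      · rw [Set.indicator_of_mem hx]
        exact pow_le_pow_left₀ (Real.sqrt_nonneg _) h1 2
      · rw [Set.indicator_of_notMem hx, h2 hx, frob_zero]
        norm_num
    have hind2_int : Integrable (U.indicator fun _ => M ^ 2)
        (volume.restrict (cell d η γ)) :=
      (integrableOn_const hcellfin.ne).indicator hUmeas
    have hind2val : ∫ x in cell d η γ, U.indicator (fun _ => M ^ 2) x = M ^ 2 * T := by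
      rw [setIntegral_indicator hUmeas, setIntegral_const, smul_eq_mul, mul_comm, measureReal_def]
    have hint2 : ∫ x in cell d η γ, frob (V x) ^ 2 ≤ M ^ 2 * T := by
      rw [← hind2val]
      exact integral_mono_of_nonneg (Filter.Eventually.of_forall fun x => sq_nonneg _)
        hind2_int (ae_restrict_of_ae hae2)
    calc (η ^ d)⁻¹ * ∫ x in cell d η γ, frob (V x) ^ 2
        ≤ (η ^ d)⁻¹ * (M ^ 2 * T) :=
          mul_le_mul_of_nonneg_left hint2 (by positivity)
      _ ≤ (η ^ d)⁻¹ * (M ^ 2 * ((2 * s) ^ d * (η + 2 * r) ^ d)) := by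
          apply mul_le_mul_of_nonneg_left _ (by positivity)
          exact mul_le_mul_of_nonneg_left hT (by positivity)
      _ = 14 ^ d * M ^ 2 * s ^ d := by
          have h7 : η + 2 * r = 7 * η := by rw [hηdef]; ring
          rw [h7, ← mul_pow, show 2 * s * (7 * η) = 14 * s * η from by ring,
            mul_pow, mul_pow]
          field_simp

end
end

section
/- Let d, n ≥ 1, M ≥ 0, σ ≥ 0 and R > 0. Let V : ℝ^d × ℝ^d → M_n(ℂ) and V⁰ : ℝ^d → M_n(ℂ) be measurable, with Frobenius norms |V(x,ξ)| ≤ M and |V⁰(x)| ≤ M for all x, ξ, and suppose |V(x,ξ) − V⁰(x)| ≤ σ whenever |ξ| ≥ R. Then there exists a constant C > 0, depending only on d, such that for every ε > 0, every η > 0 and every γ ∈ ℤ^d: | η^{−d} ∫_{□_γ^η} ( V(x, x/ε) − V⁰(x) ) dx | ≤ σ + C M min(1, (εR/η)^d). -/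
open MeasureTheory

noncomputable section

/-- The vector of entries of a matrix, as an element of Euclidean space. -/
def vec {n : ℕ} (A : Matrix (Fin n) (Fin n) ℂ) : EuclideanSpace ℂ (Fin n × Fin n) :=
  (WithLp.equiv 2 _).symm fun pq => A pq.1 pq.2

lemma frob_eq_norm_vec {n : ℕ} (A : Matrix (Fin n) (Fin n) ℂ) : frob A = ‖vec A‖ := by
  rw [EuclideanSpace.norm_eq, frob]
  congr 1
  rw [Fintype.sum_prod_type]
  rfl

lemma coord_le_norm {d : ℕ} (x : Ed d) (i : Fin d) : |x i| ≤ ‖x‖ := by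
  rw [EuclideanSpace.norm_eq]
  have h1 : |x i| = Real.sqrt (‖x i‖ ^ 2) := by
    rw [Real.sqrt_sq_eq_abs]; simp [abs_abs]
  rw [h1]
  apply Real.sqrt_le_sqrt
  exact Finset.single_le_sum (f := fun j => ‖x j‖ ^ 2) (fun j _ => by positivity)
    (Finset.mem_univ i)

set_option maxHeartbeats 1000000 in
/-- Cell-average estimate (5.13)–(5.14) of the stabilizing-oscillations
example (Section 3.3): if `|V(x,ξ) − V⁰(x)| ≤ σ` for `|ξ| ≥ R`, then the cell average
of `V(x, x/ε) − V⁰(x)` over `□_γ^η` is at most `σ + C M min(1, (εR/η)^d)`,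
with `C` depending only on `d`. -/
theorem stmt_12 (d : ℕ) (hd : 1 ≤ d) :
    ∃ C : ℝ, 0 < C ∧
      ∀ (n : ℕ), 1 ≤ n →
      ∀ (M σ R : ℝ), 0 ≤ M → 0 ≤ σ → 0 < R →
      ∀ (V : Ed d → Ed d → Matrix (Fin n) (Fin n) ℂ)
        (V₀ : Ed d → Matrix (Fin n) (Fin n) ℂ),
        (∀ p q, Measurable fun xy : Ed d × Ed d => V xy.1 xy.2 p q) →
        (∀ p q, Measurable fun x => V₀ x p q) →
        (∀ x ξ : Ed d, frob (V x ξ) ≤ M) →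
        (∀ x : Ed d, frob (V₀ x) ≤ M) →
        (∀ x ξ : Ed d, R ≤ ‖ξ‖ → frob (V x ξ - V₀ x) ≤ σ) →
      ∀ (ε η : ℝ), 0 < ε → 0 < η →
      ∀ γ : Fin d → ℤ,
        frob (fun p q => ((η : ℂ) ^ d)⁻¹ *
            ∫ x in cell d η γ, (V x (ε⁻¹ • x) p q - V₀ x p q))
          ≤ σ + C * M * min 1 ((ε * R / η) ^ d) := by
  refine ⟨2 ^ (d + 1), by positivity, ?_⟩
  intro n hn M σ R hM hσ hR V V₀ hV hV₀ hVb hV₀b hstab ε η hε hη γ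
  classical
  -- the integrand as an Euclidean-space-valued function
  set f : Ed d → EuclideanSpace ℂ (Fin n × Fin n) :=
    fun x => (WithLp.equiv 2 _).symm fun pq => V x (ε⁻¹ • x) pq.1 pq.2 - V₀ x pq.1 pq.2
    with hf
  have hfvec : ∀ x, f x = vec (V x (ε⁻¹ • x) - V₀ x) := fun x => rfl
  -- strong measurability of f
  have hgm : Measurable fun x : Ed d => (fun pq : Fin n × Fin n =>
      V x (ε⁻¹ • x) pq.1 pq.2 - V₀ x pq.1 pq.2) := by
    apply measurable_pi_lambda
    intro pq
    have h1 : Measurable fun x : Ed d => V x (ε⁻¹ • x) pq.1 pq.2 :=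
      (hV pq.1 pq.2).comp (measurable_id.prodMk (measurable_id.const_smul ε⁻¹))
    exact h1.sub (hV₀ pq.1 pq.2)
  have hfsm : StronglyMeasurable f :=
    ((PiLp.continuousLinearEquiv 2 ℂ
      (fun _ : Fin n × Fin n => ℂ)).symm.continuous).comp_stronglyMeasurable
      hgm.stronglyMeasurable
  -- pointwise norm bounds
  have hnorm2M : ∀ x : Ed d, ‖f x‖ ≤ 2 * M := by
    intro x
    rw [hfvec, ← frob_eq_norm_vec]
    have h1 : frob (V x (ε⁻¹ • x) - V₀ x) ≤ frob (V x (ε⁻¹ • x)) + frob (V₀ x) := by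
      rw [frob_eq_norm_vec, frob_eq_norm_vec, frob_eq_norm_vec]
      exact norm_sub_le (vec (V x (ε⁻¹ • x))) (vec (V₀ x))
    calc frob (V x (ε⁻¹ • x) - V₀ x) ≤ frob (V x (ε⁻¹ • x)) + frob (V₀ x) := h1
      _ ≤ M + M := add_le_add (hVb _ _) (hV₀b _)
      _ = 2 * M := by ring
  -- measure-theoretic setup
  set e := (MeasurableEquiv.toLp 2 (Fin d → ℝ)).symm
  have he : ∀ (x : Ed d) (i : Fin d), e x i = x i := fun x i => rfl
  set S : Set (Ed d) := cell d η γ with hS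
  have hScell : S = e ⁻¹' (Set.pi Set.univ fun i => Set.Icc (η * γ i) (η * γ i + η)) := by
    ext x
    simp only [hS, cell, Set.mem_setOf_eq, Set.mem_preimage, Set.mem_pi, Set.mem_univ,
      forall_true_left, Set.mem_Icc]
    rfl
  have hSmeas : MeasurableSet S := by
    rw [hScell]
    exact e.measurable (MeasurableSet.univ_pi fun i => measurableSet_Icc)
  have hSvol : volume S = ENNReal.ofReal (η ^ d) := by
    rw [hScell,
      (EuclideanSpace.volume_preserving_symm_measurableEquiv_toLp (Fin d)).measure_preimage
        ((MeasurableSet.univ_pi fun i => measurableSet_Icc).nullMeasurableSet)]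
    rw [volume_pi_pi]
    simp only [Real.volume_Icc, add_sub_cancel_left]
    rw [Finset.prod_const, Finset.card_univ, Fintype.card_fin,
      ← ENNReal.ofReal_pow hη.le]
  -- the bad set
  set B : Set (Ed d) := {x : Ed d | ‖x‖ < ε * R} with hB
  have hBopen : MeasurableSet B := (isOpen_lt (by fun_prop) continuous_const).measurableSet
  have hBvol : volume B ≤ ENNReal.ofReal ((2 * (ε * R)) ^ d) := by
    have hsub : B ⊆ e ⁻¹' (Set.pi Set.univ fun _ : Fin d => Set.Icc (-(ε * R)) (ε * R)) := by
      intro x hx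
      simp only [Set.mem_preimage, Set.mem_pi, Set.mem_univ, Set.mem_Icc, forall_true_left]
      intro i
      have := coord_le_norm x i
      have hx' : ‖x‖ < ε * R := hx
      obtain ⟨h1, h2⟩ := abs_le.mp (le_trans this hx'.le)
      exact ⟨h1, h2⟩
    calc volume B ≤ volume (e ⁻¹' (Set.pi Set.univ fun _ : Fin d => Set.Icc (-(ε * R)) (ε * R))) :=
          measure_mono hsub
      _ = ENNReal.ofReal ((2 * (ε * R)) ^ d) := by
          rw [(EuclideanSpace.volume_preserving_symm_measurableEquiv_toLp (Fin d)).measure_preimage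
            ((MeasurableSet.univ_pi fun i => measurableSet_Icc).nullMeasurableSet),
            volume_pi_pi]
          simp only [Real.volume_Icc]
          have : ε * R - -(ε * R) = 2 * (ε * R) := by ring
          rw [this, Finset.prod_const, Finset.card_univ, Fintype.card_fin,
            ← ENNReal.ofReal_pow (by positivity)]
  -- integrability on S and its pieces
  have hfint : ∀ s : Set (Ed d), volume s < ⊤ → IntegrableOn f s := by
    intro s hs
    refine Integrable.mono' (g := fun _ => (2 * M : ℝ))
      (integrableOn_const hs.ne) (hfsm.aestronglyMeasurable) ?_
    filter_upwards with x using hnorm2M x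
  have hSfin : volume S < ⊤ := by rw [hSvol]; exact ENNReal.ofReal_lt_top
  have hSBfin : volume (S ∩ B) < ⊤ := lt_of_le_of_lt (measure_mono Set.inter_subset_left) hSfin
  have hSdBfin : volume (S \ B) < ⊤ := lt_of_le_of_lt (measure_mono Set.diff_subset) hSfin
  -- the integral of f over S
  set I : EuclideanSpace ℂ (Fin n × Fin n) := ∫ x in S, f x with hI
  -- goal matrix entries equal (η^d)⁻¹ • I componentwise
  have hentry : ∀ pq : Fin n × Fin n,
      (∫ x in S, (V x (ε⁻¹ • x) pq.1 pq.2 - V₀ x pq.1 pq.2)) = I pq := by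
    intro pq
    have h := (EuclideanSpace.proj (𝕜 := ℂ) pq).integral_comp_comm (hfint S hSfin)
    exact h
  have hfrobI : frob (fun p q => ((η : ℂ) ^ d)⁻¹ *
      ∫ x in S, (V x (ε⁻¹ • x) p q - V₀ x p q)) = (η ^ d)⁻¹ * ‖I‖ := by
    refine (frob_eq_norm_vec _).trans ?_
    have hveq : vec (fun p q => ((η : ℂ) ^ d)⁻¹ *
        ∫ x in S, (V x (ε⁻¹ • x) p q - V₀ x p q)) = ((η : ℂ) ^ d)⁻¹ • I := by
      ext pq
      show ((η : ℂ) ^ d)⁻¹ * (∫ x in S, (V x (ε⁻¹ • x) pq.1 pq.2 - V₀ x pq.1 pq.2))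
        = ((η : ℂ) ^ d)⁻¹ * I pq
      rw [hentry pq]
    rw [hveq, norm_smul]
    congr 1
    rw [norm_inv, norm_pow, Complex.norm_real, Real.norm_eq_abs, abs_of_pos hη]
  -- split the integral
  have hsplit : I = (∫ x in S ∩ B, f x) + ∫ x in S \ B, f x := by
    have hdisj : Disjoint (S ∩ B) (S \ B) := Set.disjoint_left.mpr fun x hx1 hx2 => hx2.2 hx1.2
    have h := setIntegral_union hdisj (hSmeas.diff hBopen) (hfint _ hSBfin) (hfint _ hSdBfin)
    rw [Set.inter_union_diff] at h
    rw [hI, h]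
  -- bounds on pieces
  have hbound1 : ‖∫ x in S ∩ B, f x‖ ≤ 2 * M * (volume (S ∩ B)).toReal :=
    norm_setIntegral_le_of_norm_le_const hSBfin (fun x _ => hnorm2M x)
  have hbound2 : ‖∫ x in S \ B, f x‖ ≤ σ * (volume (S \ B)).toReal := by
    apply norm_setIntegral_le_of_norm_le_const hSdBfin
    intro x hx
    have hxB : ¬ (‖x‖ < ε * R) := hx.2
    push_neg at hxB
    have hξ : R ≤ ‖ε⁻¹ • x‖ := by
      rw [norm_smul, norm_inv, Real.norm_eq_abs, abs_of_pos hε]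
      calc R = ε⁻¹ * (ε * R) := by field_simp
        _ ≤ ε⁻¹ * ‖x‖ := mul_le_mul_of_nonneg_left hxB (by positivity)
    rw [hfvec, ← frob_eq_norm_vec]
    exact hstab x _ hξ
  -- measure quantities
  set a : ℝ := (volume (S ∩ B)).toReal with ha
  set b : ℝ := (volume (S \ B)).toReal with hb2
  have hab : a + b = η ^ d := by
    rw [ha, hb2, ← ENNReal.toReal_add hSBfin.ne hSdBfin.ne,
      measure_inter_add_diff S hBopen, hSvol, ENNReal.toReal_ofReal (by positivity)]
  have ha0 : 0 ≤ a := ENNReal.toReal_nonneg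
  have hb0 : 0 ≤ b := ENNReal.toReal_nonneg
  have haη : a ≤ η ^ d := by nlinarith
  have hbη : b ≤ η ^ d := by nlinarith
  have haB : a ≤ (2 * (ε * R)) ^ d := by
    rw [ha]
    have h1 : volume (S ∩ B) ≤ ENNReal.ofReal ((2 * (ε * R)) ^ d) :=
      le_trans (measure_mono Set.inter_subset_right) hBvol
    calc (volume (S ∩ B)).toReal ≤ (ENNReal.ofReal ((2 * (ε * R)) ^ d)).toReal :=
          ENNReal.toReal_mono ENNReal.ofReal_ne_top h1
      _ = (2 * (ε * R)) ^ d := ENNReal.toReal_ofReal (by positivity)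
  -- total bound on ‖I‖
  have hInorm : ‖I‖ ≤ 2 * M * a + σ * b := by
    rw [hsplit]
    exact le_trans (norm_add_le _ _) (add_le_add hbound1 hbound2)
  -- final arithmetic
  rw [hfrobI]
  have hηd : (0:ℝ) < η ^ d := by positivity
  have key : (η ^ d)⁻¹ * ‖I‖ ≤ σ + 2 ^ (d + 1) * M * min (η ^ d) ((ε * R) ^ d) / η ^ d := by
    have hmin : 2 * M * a ≤ 2 ^ (d + 1) * M * min (η ^ d) ((ε * R) ^ d) := by
      have h2d : (1:ℝ) ≤ 2 ^ d := one_le_pow₀ (by norm_num)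
      have hamin : a ≤ 2 ^ d * min (η ^ d) ((ε * R) ^ d) := by
        rcases le_total (η ^ d) ((ε * R) ^ d) with h | h
        · rw [min_eq_left h]; nlinarith
        · rw [min_eq_right h]
          calc a ≤ (2 * (ε * R)) ^ d := haB
            _ = 2 ^ d * (ε * R) ^ d := mul_pow 2 (ε * R) d
      calc 2 * M * a = (2 * M) * a := by ring
        _ ≤ (2 * M) * (2 ^ d * min (η ^ d) ((ε * R) ^ d)) :=
            mul_le_mul_of_nonneg_left hamin (by positivity)
        _ = 2 ^ (d + 1) * M * min (η ^ d) ((ε * R) ^ d) := by ring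
    have hσb : σ * b ≤ σ * η ^ d := by nlinarith
    rw [inv_mul_le_iff₀ hηd]
    calc ‖I‖ ≤ 2 * M * a + σ * b := hInorm
      _ ≤ 2 ^ (d + 1) * M * min (η ^ d) ((ε * R) ^ d) + σ * η ^ d := add_le_add hmin hσb
      _ = (σ + 2 ^ (d + 1) * M * min (η ^ d) ((ε * R) ^ d) / η ^ d) * η ^ d := by
          rw [add_mul, div_mul_cancel₀ _ hηd.ne']; ring
      _ = η ^ d * (σ + 2 ^ (d + 1) * M * min (η ^ d) ((ε * R) ^ d) / η ^ d) := mul_comm _ _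
  refine le_trans key ?_
  have hmineq : min (η ^ d) ((ε * R) ^ d) / η ^ d = min 1 ((ε * R / η) ^ d) := by
    rw [div_pow]
    conv_rhs => rw [show (1:ℝ) = η ^ d / η ^ d from (div_self hηd.ne').symm]
    rw [min_div_div_right hηd.le]
  rw [mul_div_assoc, hmineq]

end
end

section
/- Let d ≥ 1, K, K₁, K₂ ≥ 0. Let W : ℝ^d → ℂ be twice continuously differentiable with |∂W/∂ξ_j (ξ)| ≤ K for all ξ ∈ ℝ^d and all j. Let φ : ℝ^d → ℝ^d be continuously differentiable, and let Φ : ℝ^d → M_d(ℝ) be a continuously differentiable matrix-valued function such that Φ(x) · Dφ(x) = I_d for all x (Dφ(x) being the Jacobian matrix of φ), with |Φ_{ij}(x)| ≤ K₁ and |∂Φ_{ij}/∂x_i (x)| ≤ K₂ for all x and all i, j. Then there exists a constant C > 0, depending only on d, such that for every η > 0, every ε > 0 and every γ ∈ ℤ^d: | ∫_{□_γ^η} (ΔW)(φ(x)/ε) dx | ≤ C K ε ( K₁ η^{d−1} + K₂ η^d ), where ΔW := Σ_{j=1}^d ∂²W/∂ξ_j². -/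
open MeasureTheory

noncomputable section

/-- Partial derivative of a scalar function in the `j`-th coordinate direction. -/
def pdC {d : ℕ} (W : Ed d → ℂ) (j : Fin d) (ξ : Ed d) : ℂ :=
  fderiv ℝ W ξ (EuclideanSpace.single j 1)

/-- Partial derivative of a real-valued function in the `i`-th coordinate direction. -/
def pdR {d : ℕ} (g : Ed d → ℝ) (i : Fin d) (x : Ed d) : ℝ :=
  fderiv ℝ g x (EuclideanSpace.single i 1)

/-- The Laplacian `ΔW = Σ_j ∂²W/∂ξ_j²`. -/
def lapl {d : ℕ} (W : Ed d → ℂ) (ξ : Ed d) : ℂ :=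
  ∑ j, fderiv ℝ (fun y => pdC W j y) ξ (EuclideanSpace.single j 1)

/- ### Auxiliary material -/

section Aux
open Set

/-- Bound on the integral of a single partial derivative over a box, via the
divergence theorem. -/
lemma face_bound {n : ℕ} (h : (Fin (n+1) → ℝ) → ℂ) (hh : ContDiff ℝ 1 h)
    (M : ℝ) (hb : ∀ x, ‖h x‖ ≤ M) (a b : Fin (n+1) → ℝ)
    (η : ℝ) (hη : 0 < η) (hab : ∀ i, b i = a i + η) (i₀ : Fin (n+1)) :
    ‖∫ x in Set.Icc a b, fderiv ℝ h x (Pi.single i₀ 1)‖ ≤ 2 * (M * η ^ n) := by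
  have hle : a ≤ b := fun i => by rw [hab i]; linarith
  have hM : 0 ≤ M := le_trans (norm_nonneg _) (hb a)
  have hfd : Continuous (fun x => fderiv ℝ h x (Pi.single i₀ 1)) :=
    (hh.continuous_fderiv one_ne_zero).clm_apply continuous_const
  have key := integral_divergence_of_hasFDerivAt_off_countable' a b hle
    (fun i x => if i = i₀ then h x else 0)
    (fun i x => if i = i₀ then fderiv ℝ h x else 0) ∅ Set.countable_empty
    (fun i => by
      split_ifs
      · exact hh.continuous.continuousOn
      · exact continuousOn_const)
    (fun x _ i => by
      split_ifs
      · exact (hh.differentiable one_ne_zero x).hasFDerivAt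
      · exact hasFDerivAt_const 0 x)
    (by
      have : ∀ x : Fin (n+1) → ℝ,
          (∑ i, (if i = i₀ then fderiv ℝ h x else 0) (Pi.single i 1))
            = fderiv ℝ h x (Pi.single i₀ 1) := by
        intro x
        rw [Finset.sum_eq_single i₀] <;> simp +contextual
      simp only [this]
      exact hfd.continuousOn.integrableOn_compact isCompact_Icc)
  have hsum : ∀ x : Fin (n+1) → ℝ,
      (∑ i, (if i = i₀ then fderiv ℝ h x else 0) (Pi.single i 1))
        = fderiv ℝ h x (Pi.single i₀ 1) := by
    intro x
    rw [Finset.sum_eq_single i₀] <;> simp +contextual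
  simp only [hsum] at key
  rw [key, Finset.sum_eq_single i₀ (by simp +contextual) (by simp)]
  simp only [if_pos rfl]
  have hface : ∀ c : ℝ,
      ‖∫ x in Set.Icc (a ∘ Fin.succAbove i₀) (b ∘ Fin.succAbove i₀), h (Fin.insertNth i₀ c x)‖
        ≤ M * η ^ n := by
    intro c
    have hle' : (a ∘ Fin.succAbove i₀) ≤ (b ∘ Fin.succAbove i₀) := fun j => hle _
    have hvol : volume (Set.Icc (a ∘ Fin.succAbove i₀) (b ∘ Fin.succAbove i₀)) < ⊤ :=
      isCompact_Icc.measure_lt_top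
    have := norm_setIntegral_le_of_norm_le_const (μ := volume) hvol
      (f := fun x => h (Fin.insertNth i₀ c x)) (C := M) (fun x _ => hb _)
    refine this.trans ?_
    rw [measureReal_def, Real.volume_Icc_pi_toReal hle']
    have : ∀ j : Fin n, (b ∘ Fin.succAbove i₀) j - (a ∘ Fin.succAbove i₀) j = η := by
      intro j; simp [hab]
    rw [Finset.prod_congr rfl (fun j _ => this j)]
    simp
  calc ‖(∫ x in Set.Icc (a ∘ Fin.succAbove i₀) (b ∘ Fin.succAbove i₀),
          h (Fin.insertNth i₀ (b i₀) x))
        - ∫ x in Set.Icc (a ∘ Fin.succAbove i₀) (b ∘ Fin.succAbove i₀),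
          h (Fin.insertNth i₀ (a i₀) x)‖
      ≤ _ + _ := norm_sub_le _ _
    _ ≤ 2 * (M * η ^ n) := by have := hface (b i₀); have := hface (a i₀); linarith

variable {d : ℕ}

/-- The canonical linear isomorphism `(Fin d → ℝ) ≃L[ℝ] Ed d`. -/
def esymm (d : ℕ) : (Fin d → ℝ) ≃L[ℝ] Ed d := (EuclideanSpace.equiv (Fin d) ℝ).symm

lemma esymm_single (i : Fin d) : esymm d (Pi.single i 1) = EuclideanSpace.single i 1 := rfl

lemma fderiv_esymm {F : Type*} [NormedAddCommGroup F] [NormedSpace ℝ F]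
    (u : Ed d → F) (hu : Differentiable ℝ u) (y : Fin d → ℝ) (i : Fin d) :
    fderiv ℝ (fun z => u (esymm d z)) y (Pi.single i 1)
      = fderiv ℝ u (esymm d y) (EuclideanSpace.single i 1) := by
  have : (fun z => u (esymm d z)) = u ∘ (esymm d) := rfl
  rw [this, fderiv_comp y (hu _) (esymm d).differentiableAt]
  simp [ContinuousLinearEquiv.fderiv, ← esymm_single]

lemma integral_cell_eq (u : Ed d → ℂ) (η : ℝ) (γ : Fin d → ℤ) :
    ∫ x in cell d η γ, u x
      = ∫ y in Set.Icc (fun i => η * γ i) (fun i => η * γ i + η), u (esymm d y) := by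
  have hmp : MeasurePreserving (MeasurableEquiv.toLp 2 (Fin d → ℝ))
      volume volume := (EuclideanSpace.volume_preserving_symm_measurableEquiv_toLp (Fin d)).symm
  have h2 := hmp.setIntegral_preimage_emb
    (MeasurableEquiv.toLp 2 (Fin d → ℝ)).measurableEmbedding u (cell d η γ)
  have hset : (⇑(MeasurableEquiv.toLp 2 (Fin d → ℝ))) ⁻¹' (cell d η γ)
      = Set.Icc (fun i => η * γ i) (fun i => η * γ i + η) := by
    ext y
    simp only [Set.mem_preimage, cell, Set.mem_setOf_eq, Set.mem_Icc, Pi.le_def]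
    constructor
    · intro h; exact ⟨fun i => (h i).1, fun i => (h i).2⟩
    · intro h i; exact ⟨h.1 i, h.2 i⟩
  rw [hset] at h2
  exact h2.symm

lemma pdC_contDiff (W : Ed d → ℂ) (hW : ContDiff ℝ 2 W) (j : Fin d) :
    ContDiff ℝ 1 (pdC W j) := by
  have h1 : ContDiff ℝ 1 (fderiv ℝ W) := hW.fderiv_right (by norm_num)
  exact h1.clm_apply contDiff_const

lemma matrix_flip (x : Ed d) (φ : Ed d → Ed d) (Φ : Ed d → Fin d → Fin d → ℝ)
    (hinv : ∀ (i j : Fin d),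
      ∑ k, Φ x i k * fderiv ℝ φ x (EuclideanSpace.single j 1) k = if i = j then 1 else 0)
    (j : Fin d) :
    ∑ i, Φ x i j • fderiv ℝ φ x (EuclideanSpace.single i 1)
      = (EuclideanSpace.single j 1 : Ed d) := by
  set A : Matrix (Fin d) (Fin d) ℝ := Matrix.of (fun i k => Φ x i k) with hA
  set B : Matrix (Fin d) (Fin d) ℝ :=
    Matrix.of (fun k i => fderiv ℝ φ x (EuclideanSpace.single i 1) k) with hB
  have hAB : A * B = 1 := by
    ext i j
    simpa [A, B, Matrix.mul_apply, Matrix.one_apply] using hinv i j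
  have hBA : B * A = 1 := mul_eq_one_comm.mp hAB
  apply PiLp.ext
  intro k
  have hcoord : (∑ i, Φ x i j • fderiv ℝ φ x (EuclideanSpace.single i 1) : Ed d) k
      = ∑ i, Φ x i j * fderiv ℝ φ x (EuclideanSpace.single i 1) k := by
    induction (Finset.univ : Finset (Fin d)) using Finset.cons_induction with
    | empty => simp
    | cons a s ha ih => rw [Finset.sum_cons, Finset.sum_cons, ← ih]; rfl
  rw [hcoord]
  have := congrFun (congrFun hBA k) j
  simp only [Matrix.mul_apply, Matrix.one_apply, B, A, Matrix.of_apply] at this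
  rw [show (∑ i, Φ x i j * fderiv ℝ φ x (EuclideanSpace.single i 1) k)
      = ∑ i, fderiv ℝ φ x (EuclideanSpace.single i 1) k * Φ x i j by
    exact Finset.sum_congr rfl fun i _ => mul_comm _ _, this]
  simp [EuclideanSpace.single_apply, eq_comm]

lemma pointwise_id (W : Ed d → ℂ) (hW : ContDiff ℝ 2 W)
    (φ : Ed d → Ed d) (hφ : ContDiff ℝ 1 φ)
    (Φ : Ed d → Fin d → Fin d → ℝ)
    (hinv : ∀ (x : Ed d) (i j : Fin d),
      ∑ k, Φ x i k * fderiv ℝ φ x (EuclideanSpace.single j 1) k = if i = j then 1 else 0)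
    (ε : ℝ) (hε : 0 < ε) (x : Ed d) :
    lapl W (ε⁻¹ • φ x)
      = ε • ∑ j, ∑ i, Φ x i j •
          fderiv ℝ (fun y => pdC W j (ε⁻¹ • φ y)) x (EuclideanSpace.single i 1) := by
  set ψ : Ed d → Ed d := fun y => ε⁻¹ • φ y with hψ
  have hψd : Differentiable ℝ ψ := (hφ.differentiable one_ne_zero).const_smul ε⁻¹
  have hψx : fderiv ℝ ψ x = ε⁻¹ • fderiv ℝ φ x :=
    fderiv_const_smul (hφ.differentiable one_ne_zero x) ε⁻¹
  have hg : ∀ j : Fin d, fderiv ℝ (fun y => pdC W j (ψ y)) x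
      = (fderiv ℝ (pdC W j) (ψ x)).comp (fderiv ℝ ψ x) := by
    intro j
    exact fderiv_comp x ((pdC_contDiff W hW j).differentiable one_ne_zero _) (hψd x)
  have key : ∀ j : Fin d,
      ∑ i, Φ x i j • fderiv ℝ (fun y => pdC W j (ψ y)) x (EuclideanSpace.single i 1)
        = ε⁻¹ • fderiv ℝ (pdC W j) (ψ x) (EuclideanSpace.single j 1) := by
    intro j
    have : ∀ i, fderiv ℝ (fun y => pdC W j (ψ y)) x (EuclideanSpace.single i 1)
        = fderiv ℝ (pdC W j) (ψ x) (ε⁻¹ • fderiv ℝ φ x (EuclideanSpace.single i 1)) := by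
      intro i
      rw [hg j]; simp [hψx]
    simp only [this]
    rw [← ContinuousLinearMap.map_smul_of_tower]
    rw [show (∑ i, Φ x i j •
        (fderiv ℝ (pdC W j) (ψ x)) (ε⁻¹ • (fderiv ℝ φ x) (EuclideanSpace.single i 1)))
      = (fderiv ℝ (pdC W j) (ψ x))
          (∑ i, Φ x i j • ε⁻¹ • (fderiv ℝ φ x) (EuclideanSpace.single i 1)) by
      rw [map_sum]
      exact Finset.sum_congr rfl fun i _ => (ContinuousLinearMap.map_smul_of_tower _ _ _).symm]
    congr 1
    rw [← matrix_flip x φ Φ (hinv x) j, Finset.smul_sum]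
    exact Finset.sum_congr rfl fun i _ => (smul_comm _ _ _)
  simp only [hψ] at key
  simp only [key, lapl, Finset.smul_sum, smul_smul, mul_inv_cancel₀ hε.ne', one_smul]

end Aux

/-- Integration-by-parts estimate (5.43)–(5.44) of the
modulated-periodicity example (Section 3.6): if `W` is `C²` with `|∂W/∂ξ_j| ≤ K`,
`φ` is `C¹` and `Φ` is a `C¹` pointwise left/right inverse of the Jacobian of `φ`
with `|Φ_{ij}| ≤ K₁` and `|∂Φ_{ij}/∂x_i| ≤ K₂`, then
`|∫_{□_γ^η} (ΔW)(φ(x)/ε) dx| ≤ C K ε (K₁ η^{d−1} + K₂ η^d)`, `C = C(d)`. -/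
theorem stmt_15 (d : ℕ) (hd : 1 ≤ d) :
    ∃ C : ℝ, 0 < C ∧
      ∀ (K K₁ K₂ : ℝ), 0 ≤ K → 0 ≤ K₁ → 0 ≤ K₂ →
      ∀ (W : Ed d → ℂ), ContDiff ℝ 2 W →
        (∀ (ξ : Ed d) (j : Fin d), ‖pdC W j ξ‖ ≤ K) →
      ∀ (φ : Ed d → Ed d), ContDiff ℝ 1 φ →
      ∀ (Φ : Ed d → Fin d → Fin d → ℝ),
        (∀ i j, ContDiff ℝ 1 fun x => Φ x i j) →
        (∀ (x : Ed d) (i j : Fin d),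
          ∑ k, Φ x i k * fderiv ℝ φ x (EuclideanSpace.single j 1) k
            = if i = j then 1 else 0) →
        (∀ (x : Ed d) (i j : Fin d), |Φ x i j| ≤ K₁) →
        (∀ (x : Ed d) (i j : Fin d), |pdR (fun y => Φ y i j) i x| ≤ K₂) →
      ∀ (η ε : ℝ), 0 < η → 0 < ε →
      ∀ γ : Fin d → ℤ,
        ‖∫ x in cell d η γ, lapl W (ε⁻¹ • φ x)‖
          ≤ C * K * ε * (K₁ * η ^ (d - 1) + K₂ * η ^ d) := by
  refine ⟨2 * d ^ 2, by positivity, ?_⟩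
  intro K K₁ K₂ hK hK₁ hK₂ W hW hWb φ hφ Φ hΦC hinv hΦb hΦdb η ε hη hε γ
  obtain ⟨n, rfl⟩ : ∃ n, d = n + 1 := ⟨d - 1, (Nat.succ_pred_eq_of_pos hd).symm⟩
  simp only [Nat.add_sub_cancel]
  -- abbreviations
  set a : Fin (n+1) → ℝ := fun i => η * γ i with ha
  set b : Fin (n+1) → ℝ := fun i => η * γ i + η with hb
  have hab : ∀ i, b i = a i + η := fun i => rfl
  have hle : a ≤ b := fun i => by simp [ha, hb]; linarith
  set g : Fin (n+1) → Ed (n+1) → ℂ := fun j x => pdC W j (ε⁻¹ • φ x) with hgdef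
  have hgC : ∀ j, ContDiff ℝ 1 (g j) := by
    intro j
    exact (pdC_contDiff W hW j).comp ((hφ.const_smul ε⁻¹ : ContDiff ℝ 1 fun x => ε⁻¹ • φ x))
  have hgb : ∀ j x, ‖g j x‖ ≤ K := fun j x => hWb _ j
  -- transfer to the box
  rw [integral_cell_eq]
  -- functions on the box side
  set G : Fin (n+1) → (Fin (n+1) → ℝ) → ℂ := fun j y => g j (esymm (n+1) y) with hGdef
  set Q : Fin (n+1) → Fin (n+1) → (Fin (n+1) → ℝ) → ℝ :=
    fun i j y => Φ (esymm (n+1) y) i j with hQdef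
  have hGC : ∀ j, ContDiff ℝ 1 (G j) := fun j => (hgC j).comp (esymm (n+1)).contDiff
  have hQC : ∀ i j, ContDiff ℝ 1 (Q i j) := fun i j => (hΦC i j).comp (esymm (n+1)).contDiff
  -- pointwise identity on the box side
  have hpt : ∀ y : Fin (n+1) → ℝ,
      lapl W (ε⁻¹ • φ (esymm (n+1) y))
        = ε • ∑ j, ∑ i, Q i j y • fderiv ℝ (G j) y (Pi.single i 1) := by
    intro y
    rw [pointwise_id W hW φ hφ Φ hinv ε hε (esymm (n+1) y)]
    congr 1
    refine Finset.sum_congr rfl fun j _ => Finset.sum_congr rfl fun i _ => ?_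
    rw [hGdef]
    congr 1
    exact (fderiv_esymm (g j) ((hgC j).differentiable one_ne_zero) y i).symm
  simp only [hpt]
  -- interchange integral with smul and sums
  have hint : ∀ (j i : Fin (n+1)), IntegrableOn
      (fun y => Q i j y • fderiv ℝ (G j) y (Pi.single i 1)) (Set.Icc a b) volume := by
    intro j i
    apply ContinuousOn.integrableOn_compact isCompact_Icc
    exact (((hQC i j).continuous).smul
      (((hGC j).continuous_fderiv one_ne_zero).clm_apply continuous_const)).continuousOn
  rw [integral_smul, integral_finset_sum _ (fun j _ => integrable_finset_sum _
    (fun i _ => hint j i))]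
  have hswap : ∀ j ∈ Finset.univ, (∫ y in Set.Icc a b,
        ∑ i, Q i j y • fderiv ℝ (G j) y (Pi.single i 1))
      = ∑ i, ∫ y in Set.Icc a b, Q i j y • fderiv ℝ (G j) y (Pi.single i 1) :=
    fun j _ => integral_finset_sum _ (fun i _ => hint j i)
  rw [Finset.sum_congr rfl hswap]
  -- bound each single integral
  have hbound : ∀ (j i : Fin (n+1)),
      ‖∫ y in Set.Icc a b, Q i j y • fderiv ℝ (G j) y (Pi.single i 1)‖
        ≤ 2 * (K₁ * K * η ^ n) + K₂ * K * η ^ (n+1) := by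
    intro j i
    set H : (Fin (n+1) → ℝ) → ℂ := fun y => Q i j y • G j y with hHdef
    have hHC : ContDiff ℝ 1 H := (hQC i j).smul (hGC j)
    have hsplit : ∀ y, Q i j y • fderiv ℝ (G j) y (Pi.single i 1)
        = fderiv ℝ H y (Pi.single i 1)
          - (fderiv ℝ (Q i j) y (Pi.single i 1)) • G j y := by
      intro y
      have := fderiv_fun_smul (𝕜 := ℝ) (c := Q i j) (f := G j) (x := y)
        ((hQC i j).differentiable one_ne_zero y) ((hGC j).differentiable one_ne_zero y)
      rw [hHdef]
      rw [show fderiv ℝ (fun y => Q i j y • G j y) y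
          = Q i j y • fderiv ℝ (G j) y + (fderiv ℝ (Q i j) y).smulRight (G j y) from this]
      simp [ContinuousLinearMap.smulRight_apply]
    simp only [hsplit]
    have hint1 : IntegrableOn (fun y => fderiv ℝ H y (Pi.single i 1)) (Set.Icc a b) volume := by
      apply ContinuousOn.integrableOn_compact isCompact_Icc
      exact ((hHC.continuous_fderiv one_ne_zero).clm_apply continuous_const).continuousOn
    have hint2 : IntegrableOn
        (fun y => (fderiv ℝ (Q i j) y (Pi.single i 1)) • G j y) (Set.Icc a b) volume := by
      apply ContinuousOn.integrableOn_compact isCompact_Icc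
      exact ((((hQC i j).continuous_fderiv one_ne_zero).clm_apply continuous_const).smul
        (hGC j).continuous).continuousOn
    rw [integral_sub hint1 hint2]
    refine (norm_sub_le _ _).trans (add_le_add ?_ ?_)
    · -- boundary term
      refine face_bound H hHC (K₁ * K) ?_ a b η hη hab i
      intro y
      rw [hHdef, norm_smul]
      exact mul_le_mul (by simpa using hΦb (esymm (n+1) y) i j) (hgb j _)
        (norm_nonneg _) hK₁
    · -- volume term
      have hvol : volume (Set.Icc a b) < ⊤ := isCompact_Icc.measure_lt_top
      have h1 := norm_setIntegral_le_of_norm_le_const (μ := volume) hvol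
        (f := fun y => (fderiv ℝ (Q i j) y (Pi.single i 1)) • G j y) (C := K₂ * K)
        (fun y _ => by
          rw [norm_smul]
          have hQd : fderiv ℝ (Q i j) y (Pi.single i 1)
              = pdR (fun z => Φ z i j) i (esymm (n+1) y) := by
            rw [hQdef, pdR]
            exact fderiv_esymm (fun z => Φ z i j) ((hΦC i j).differentiable one_ne_zero) y i
          rw [hQd]
          exact mul_le_mul (by simpa using hΦdb (esymm (n+1) y) i j) (hgb j _)
            (norm_nonneg _) hK₂)
      refine h1.trans ?_
      rw [measureReal_def, Real.volume_Icc_pi_toReal hle]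
      have hss : ∀ i : Fin (n+1), b i - a i = η := fun i => by rw [hab i]; ring
      rw [Finset.prod_congr rfl (fun i _ => hss i)]
      simp
  -- sum up
  have hsum : ‖∑ j : Fin (n+1), ∑ i : Fin (n+1),
      ∫ y in Set.Icc a b, Q i j y • fderiv ℝ (G j) y (Pi.single i 1)‖
      ≤ ((n+1 : ℕ) : ℝ) * (((n+1 : ℕ) : ℝ) *
          (2 * (K₁ * K * η ^ n) + K₂ * K * η ^ (n+1))) := by
    refine (norm_sum_le _ _).trans ?_
    refine (Finset.sum_le_sum (fun j _ => (norm_sum_le _ _).trans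
      (Finset.sum_le_sum (fun i _ => hbound j i)))).trans ?_
    simp only [Finset.sum_const, Finset.card_univ, Fintype.card_fin, nsmul_eq_mul]
    push_cast
    exact le_of_eq (by ring)
  rw [norm_smul, Real.norm_of_nonneg hε.le]
  have hηn : (0:ℝ) ≤ η ^ n := by positivity
  have hηd : (0:ℝ) ≤ η ^ (n+1) := by positivity
  have hfin := mul_le_mul_of_nonneg_left hsum hε.le
  refine hfin.trans ?_
  push_cast
  nlinarith [mul_nonneg (mul_nonneg (mul_nonneg hε.le hK) hK₂) hηd, sq_nonneg ((n:ℝ)+1)]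

end
end
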